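/- Let V be a finite-dimensional vector space over an algebraically closed field F of characteristic zero equipped with a nondegenerate symmetric bilinear form B, and let X ∈ so(V) (i.e. B(Xv, w) + B(v, Xw) = 0 for all v, w). If for some λ ∈ F one has 2·rank(X - λ·Id_V) < dim V, then λ = 0. -/

import Mathlib

open Module

/-- For `X ∈ so(V)` (skew w.r.t. a nondegenerate symmetric form `B`), if
`2·rank(X - λ·Id) < dim V` for some scalar `λ`, then `λ = 0`. -/
theorem stmt_6 (F V : Type*) [Field F] [IsAlgClosed F] [CharZero F]
    [AddCommGroup V] [Module F V] [FiniteDimensional F V]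
    (ω : LinearMap.BilinForm F V) (hnd : ω.Nondegenerate)
    (hsymm : ∀ v w : V, ω v w = ω w v)
    (X : Module.End F V) (hX : ∀ v w : V, ω (X v) w = - ω v (X w))
    (lam : F)
    (h : 2 * finrank F ↥(LinearMap.range (X - lam • 1)) < finrank F V) :
    lam = 0 := by
  by_contra hlam
  set W := LinearMap.ker (X - lam • 1) with hW
  have hrefl : ω.IsRefl := fun v w hv => by rw [hsymm]; exact hv
  have heig : ∀ v ∈ W, X v = lam • v := by
    intro v hv
    rw [hW, LinearMap.mem_ker] at hv
    have : X v - lam • v = 0 := by simpa using hv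
    exact sub_eq_zero.mp this
  -- W is totally isotropic
  have hiso : W ≤ ω.orthogonal W := by
    intro w hw v hv
    have h1 : ω (X v) w = - ω v (X w) := hX v w
    rw [heig v hv, heig w hw] at h1
    simp only [map_smul, LinearMap.smul_apply, smul_eq_mul] at h1
    have h2 : (2 * lam) * ω v w = 0 := by linear_combination h1
    have h3 : (2 : F) * lam ≠ 0 := mul_ne_zero two_ne_zero hlam
    exact (mul_eq_zero.mp h2).resolve_left h3
  have hle : finrank F W ≤ finrank F (ω.orthogonal W) := Submodule.finrank_mono hiso
  rw [LinearMap.BilinForm.finrank_orthogonal hnd W] at hle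
  have hrn := LinearMap.finrank_range_add_finrank_ker (X - lam • 1)
  rw [← hW] at hrn
  have hle2 : finrank F W ≤ finrank F V := Submodule.finrank_le W
  omega
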